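/- arXiv:math/0501304 — 3 statements merged into one kernel-verified Lean document; each statement's English description precedes it below -/
import Mathlib

section
/- Let E be a torsion-free group and let π : E → G be a surjective group homomorphism whose kernel is infinite cyclic and contained in the center of E. Then every finite subgroup of G is cyclic. -/
/-- If `E` is a torsion-free group and `π : E → G` is a surjective homomorphism whose kernel
is infinite cyclic and central, then every finite subgroup of `G` is cyclic. -/
theorem finite_subgroups_cyclic {E G : Type*} [Group E] [Group G] (π : E →* G)
    (htf : ∀ e : E, IsOfFinOrder e → e = 1)
    (hsurj : Function.Surjective π)
    (z : E) (hker : π.ker = Subgroup.zpowers z) (hz : ¬ IsOfFinOrder z)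
    (hcentral : π.ker ≤ Subgroup.center E) :
    ∀ H : Subgroup G, Finite H → IsCyclic H := by
  intro H hH
  -- the preimage
  set H' : Subgroup E := H.comap π with hH'
  -- restriction map p : H' →* H, surjective
  let p : H' →* H := π.subgroupComap H
  have hpsurj : Function.Surjective p := by
    rintro ⟨h, hh⟩
    obtain ⟨e, he⟩ := hsurj h
    exact ⟨⟨e, by simp [hH', Subgroup.mem_comap, he, hh]⟩, Subtype.ext he⟩
  -- ker p is the kernel subgroup, quotient is finite
  have hkerp : p.ker = π.ker.subgroupOf H' := by
    ext x
    simp [p, MonoidHom.subgroupComap, MonoidHom.mem_ker, Subgroup.mem_subgroupOf,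
      Subgroup.ext_iff]
    constructor
    · intro hx; exact congrArg Subtype.val hx
    · intro hx; exact Subtype.ext hx
  have hfin : Finite (H' ⧸ p.ker) := by
    have := (QuotientGroup.quotientKerEquivOfSurjective p hpsurj).toEquiv.finite_iff
    exact this.mpr hH
  have hkerle : p.ker ≤ Subgroup.center H' := by
    rw [hkerp]
    rintro ⟨x, hx⟩ hxk
    have hxc : x ∈ Subgroup.center E := hcentral hxk
    rw [Subgroup.mem_center_iff]
    intro ⟨g, hg⟩
    exact Subtype.ext ((Subgroup.mem_center_iff.mp hxc) g)
  have hfinidx : (Subgroup.center H').FiniteIndex := by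
    have h1 : p.ker.FiniteIndex := Subgroup.finiteIndex_of_finite_quotient
    exact Subgroup.finiteIndex_of_le hkerle
  -- H' is abelian via the transfer homomorphism
  have hcomm : ∀ a b : H', a * b = b * a := by
    intro a b
    let f := MonoidHom.transferCenterPow H'
    have hfin : (Subgroup.center H').index ≠ 0 := hfinidx.index_ne_zero
    have hinj : Function.Injective f := by
      rw [injective_iff_map_eq_one]
      intro a ha
      have : (a : E) ^ (Subgroup.center H').index = 1 := by
        have h2 : ((f a : ↥H') : E) = 1 := by rw [ha]; rfl
        rw [MonoidHom.transferCenterPow_apply] at h2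
        simpa using h2
      exact Subtype.ext (htf _ (isOfFinOrder_iff_pow_eq_one.mpr ⟨_, Nat.pos_of_ne_zero hfin, this⟩))
    apply hinj
    rw [map_mul, map_mul]
    exact Subtype.ext ((Subgroup.mem_center_iff.mp (f b).2) (f a : H'))
  -- the power map into zpowers z
  set n : ℕ := Nat.card H with hn
  have hn0 : n ≠ 0 := Nat.card_ne_zero.mpr ⟨inferInstance, inferInstance⟩
  have hpow : ∀ x : H', (x : E) ^ n ∈ Subgroup.zpowers z := by
    intro x
    rw [← hker, MonoidHom.mem_ker, map_pow]
    have : (p x) ^ n = 1 := pow_card_eq_one'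
    have := congrArg Subtype.val this
    exact this
  let ψ : H' →* Subgroup.zpowers z :=
    { toFun := fun x => ⟨(x : E) ^ n, hpow x⟩
      map_one' := by simp
      map_mul' := by
        intro x y
        have hc : Commute (x : E) (y : E) := congrArg Subtype.val (hcomm x y)
        ext
        simp [hc.mul_pow] }
  have hψinj : Function.Injective ψ := by
    rw [injective_iff_map_eq_one]
    intro a ha
    have : (a : E) ^ n = 1 := congrArg Subtype.val ha
    exact Subtype.ext (htf _ (isOfFinOrder_iff_pow_eq_one.mpr ⟨_, Nat.pos_of_ne_zero hn0, this⟩))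
  -- zpowers z is cyclic
  have hzc : IsCyclic (Subgroup.zpowers z) := by
    refine ⟨⟨⟨z, Subgroup.mem_zpowers z⟩, ?_⟩⟩
    rintro ⟨x, k, rfl⟩
    exact ⟨k, rfl⟩
  -- hence H' is cyclic
  have hH'c : IsCyclic H' := by
    have : IsCyclic ψ.range := Subgroup.isCyclic _
    exact isCyclic_of_surjective (MonoidHom.ofInjective hψinj).symm
      (MulEquiv.surjective _)
  exact isCyclic_of_surjective p hpsurj
end

section
/- Let E be a torsion-free group and let π : E → G be a surjective group homomorphism whose kernel is infinite cyclic and contained in the center of E. Then for every finite subgroup H of G, the preimage π⁻¹(H) is an infinite cyclic subgroup of E, and the kernel of π has index equal to the order of H inside π⁻¹(H). -/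
/-- If `E` is a torsion-free group and `π : E → G` is a surjective homomorphism whose kernel
is infinite cyclic and central, then for every finite subgroup `H` of `G` the preimage
`π⁻¹(H)` is infinite cyclic, and the kernel of `π` has index `|H|` inside `π⁻¹(H)`. -/
theorem preimage_of_finite_subgroup_infinite_cyclic {E G : Type*} [Group E] [Group G]
    (π : E →* G)
    (htf : ∀ e : E, IsOfFinOrder e → e = 1)
    (hsurj : Function.Surjective π)
    (z : E) (hker : π.ker = Subgroup.zpowers z) (hz : ¬ IsOfFinOrder z)
    (hcentral : π.ker ≤ Subgroup.center E) :
    ∀ H : Subgroup G, Finite H →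
      (∃ w : E, ¬ IsOfFinOrder w ∧ H.comap π = Subgroup.zpowers w) ∧
      π.ker.relIndex (H.comap π) = Nat.card H := by
  intro H hH
  have hrel : π.ker.relIndex (H.comap π) = Nat.card H := by
    rw [← π.comap_bot, Subgroup.relIndex_comap,
      Subgroup.map_comap_eq_self_of_surjective hsurj, Subgroup.relIndex_bot_left]
  refine ⟨?_, hrel⟩
  set K : Subgroup E := H.comap π with hK
  have hn : Nat.card H ≠ 0 := Nat.card_pos.ne'
  have hzker : z ∈ π.ker := hker ▸ Subgroup.mem_zpowers z
  have hzK : z ∈ K := by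
    have h1 : π z = 1 := MonoidHom.mem_ker.mp hzker
    simp [hK, Subgroup.mem_comap, h1, H.one_mem]
  set z' : K := ⟨z, hzK⟩ with hz'
  -- identify the kernel inside K with the powers of z'
  have hsub : π.ker.subgroupOf K = Subgroup.zpowers z' := by
    ext x
    simp only [Subgroup.mem_subgroupOf, hker, Subgroup.mem_zpowers_iff]
    constructor
    · rintro ⟨k, hk⟩
      refine ⟨k, Subtype.ext ?_⟩
      simp only [SubgroupClass.coe_zpow, hz']
      exact hk
    · rintro ⟨k, hk⟩
      exact ⟨k, by simpa [hz'] using congrArg Subtype.val hk⟩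
  have hidx : (Subgroup.zpowers z').index = Nat.card H := by
    rw [← hsub]; exact hrel
  -- the powers of z' are central in K
  have hle : Subgroup.zpowers z' ≤ Subgroup.center K := by
    rw [← hsub]
    intro x hx
    rw [Subgroup.mem_subgroupOf] at hx
    rw [Subgroup.mem_center_iff]
    intro g
    exact Subtype.ext ((Subgroup.mem_center_iff.mp (hcentral hx)) (g : E))
  haveI hFI : (Subgroup.center K).FiniteIndex :=
    ⟨ne_zero_of_dvd_ne_zero (hidx ▸ hn) (Subgroup.index_dvd_of_le hle)⟩
  -- the transfer homomorphism K →* center K, injective by torsion-freeness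
  set f := MonoidHom.transferCenterPow (G := K) with hf
  have hfinj : Function.Injective f := by
    rw [injective_iff_map_eq_one]
    intro x hx
    have h1 : (x : E) ^ (Subgroup.center K).index = 1 := by
      have h2 := congrArg Subtype.val hx
      rw [MonoidHom.transferCenterPow_apply] at h2
      have h3 := congrArg Subtype.val h2
      simpa using h3
    have hfin : IsOfFinOrder (x : E) :=
      isOfFinOrder_iff_pow_eq_one.mpr
        ⟨_, Nat.pos_of_ne_zero hFI.index_ne_zero, h1⟩
    exact Subtype.ext (by simpa using htf _ hfin)
  -- the element z' as an element of the center
  set c : Subgroup.center K := ⟨z', hle (Subgroup.mem_zpowers z')⟩ with hc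
  have hsub2 : (Subgroup.zpowers z').subgroupOf (Subgroup.center K) = Subgroup.zpowers c := by
    ext x
    simp only [Subgroup.mem_subgroupOf, Subgroup.mem_zpowers_iff]
    constructor
    · rintro ⟨k, hk⟩
      refine ⟨k, Subtype.ext ?_⟩
      simp only [SubgroupClass.coe_zpow, hc]
      exact hk
    · rintro ⟨k, hk⟩
      exact ⟨k, by simpa [hc] using congrArg Subtype.val hk⟩
  haveI hFI2 : (Subgroup.zpowers c).FiniteIndex := by
    refine ⟨ne_zero_of_dvd_ne_zero (hidx ▸ hn) ?_⟩
    rw [← hsub2]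
    exact Subgroup.relIndex_dvd_index_of_le hle
  set m := (Subgroup.zpowers c).index with hm
  have hpow : ∀ x : Subgroup.center K, x ^ m ∈ Subgroup.zpowers c :=
    fun x => Subgroup.pow_index_mem _ x
  set g : Subgroup.center K →* Subgroup.zpowers c :=
    (open IsMulCommutative in powMonoidHom (α := Subgroup.center K) m : Subgroup.center K →* Subgroup.center K).codRestrict _ hpow with hg
  have hginj : Function.Injective g := by
    rw [injective_iff_map_eq_one]
    intro x hx
    have h1 : x ^ m = 1 := by
      have h2 := congrArg Subtype.val hx
      simpa [hg, powMonoidHom] using h2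
    have h3 : (((x : K)) : E) ^ m = 1 := by
      have := congrArg (fun y : Subgroup.center K => (((y : K)) : E)) h1
      simpa using this
    have hfin : IsOfFinOrder (((x : K)) : E) :=
      isOfFinOrder_iff_pow_eq_one.mpr ⟨_, Nat.pos_of_ne_zero hFI2.index_ne_zero, h3⟩
    exact Subtype.ext (Subtype.ext (by simpa using htf _ hfin))
  -- the target is cyclic
  haveI hcyc : IsCyclic (Subgroup.zpowers c) := by
    refine ⟨⟨⟨c, Subgroup.mem_zpowers c⟩, fun x => ?_⟩⟩
    obtain ⟨k, hk⟩ := Subgroup.mem_zpowers_iff.mp x.2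
    refine Subgroup.mem_zpowers_iff.mpr ⟨k, Subtype.ext ?_⟩
    simp only [SubgroupClass.coe_zpow]
    exact hk
  -- K embeds in a cyclic group, hence is cyclic
  set ψ : K →* Subgroup.zpowers c := g.comp f with hψ
  have hψinj : Function.Injective ψ := hginj.comp hfinj
  haveI : IsCyclic ψ.range := Subgroup.isCyclic _
  have hKcyc : IsCyclic K :=
    isCyclic_of_surjective (MonoidHom.ofInjective hψinj).symm
      (MonoidHom.ofInjective hψinj).symm.surjective
  obtain ⟨g0, hg0⟩ := hKcyc.exists_generator
  refine ⟨(g0 : E), ?_, ?_⟩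
  · intro hfin
    obtain ⟨k, hk⟩ := Subgroup.mem_zpowers_iff.mp (hg0 z')
    have hzk : (g0 : E) ^ k = z := by simpa using congrArg Subtype.val hk
    exact hz (hzk ▸ hfin.zpow)
  · ext x
    constructor
    · intro hx
      obtain ⟨k, hk⟩ := Subgroup.mem_zpowers_iff.mp (hg0 ⟨x, hx⟩)
      exact Subgroup.mem_zpowers_iff.mpr ⟨k, by simpa using congrArg Subtype.val hk⟩
    · intro hx
      obtain ⟨k, hk⟩ := Subgroup.mem_zpowers_iff.mp hx
      exact hk ▸ Subgroup.zpow_mem _ g0.2 k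
end

section
/- The group with presentation ⟨a, b ∣ aba = bab⟩ is torsion-free: every element of finite order is the identity. -/
set_option linter.unusedTactic false
set_option linter.unreachableTactic false
set_option linter.unusedSectionVars false

/-- The braid relation `aba(bab)⁻¹` on two generators. -/
def braidRel : Set (FreeGroup (Fin 2)) :=
  {FreeGroup.of 0 * FreeGroup.of 1 * FreeGroup.of 0 *
    (FreeGroup.of 1 * FreeGroup.of 0 * FreeGroup.of 1)⁻¹}

/-- The braid group on three strands `B₃ = ⟨a, b ∣ aba = bab⟩`. -/
abbrev B3 : Type := PresentedGroup braidRel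

namespace B3Proof

section Part1

open FreeGroup List

variable {α : Type*} [DecidableEq α]

/-- The no-cancellation relation between adjacent letters. -/
def NC (p q : α × Bool) : Prop := ¬(p.1 = q.1 ∧ p.2 = !q.2)

instance : DecidableRel (NC (α := α)) := fun _ _ => instDecidableNot

theorem chain'_reduce (L : List (α × Bool)) : List.Chain' NC (reduce L) := by
  induction L with
  | nil => exact List.isChain_nil
  | cons x L ih =>
    rw [reduce.cons]
    rcases h : reduce L with _ | ⟨y, t⟩
    · exact List.isChain_singleton _
    · rw [h] at ih
      show List.Chain' NC (if x.1 = y.1 ∧ x.2 = !y.2 then t else x :: y :: t)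
      by_cases hc : x.1 = y.1 ∧ x.2 = !y.2
      · rw [if_pos hc]; exact ih.tail
      · rw [if_neg hc]; exact List.isChain_cons_cons.mpr ⟨hc, ih⟩

theorem reduce_eq_self (L : List (α × Bool)) (h : List.Chain' NC L) : reduce L = L := by
  induction L with
  | nil => rfl
  | cons x L ih =>
    rw [reduce.cons, ih h.tail]
    rcases L with _ | ⟨y, t⟩
    · rfl
    · have hnc : ¬(x.1 = y.1 ∧ x.2 = !y.2) := (List.isChain_cons_cons.mp h).1
      show (if x.1 = y.1 ∧ x.2 = !y.2 then t else x :: y :: t) = x :: y :: t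
      rw [if_neg hnc]

theorem mk_pow (L : List (α × Bool)) (n : ℕ) :
    (FreeGroup.mk L) ^ n = FreeGroup.mk ((List.replicate n L).flatten) := by
  induction n with
  | zero => simp [FreeGroup.one_eq_mk]
  | succ n ih =>
    rw [pow_succ', List.replicate_succ, List.flatten_cons, ← FreeGroup.mul_mk, ih]

theorem chain'_flatten_replicate (L : List (α × Bool)) (h : List.Chain' NC L)
    (hc : ∀ p ∈ L.getLast?, ∀ q ∈ L.head?, NC p q) (n : ℕ) :
    List.Chain' NC (L ++ (List.replicate n L).flatten) := by
  induction n with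
  | zero => simpa using h
  | succ n ih =>
    rw [List.replicate_succ, List.flatten_cons]
    rw [show List.Chain' NC _ = List.IsChain NC _ from rfl, List.isChain_append]
    refine ⟨h, ih, ?_⟩
    intro p hp q hq
    refine hc p hp q ?_
    rcases L with _ | ⟨x, t⟩
    · simp at hp
    · simpa using hq

theorem conj_pow_aux {G : Type*} [Group G] (c g : G) (n : ℕ) :
    (c⁻¹ * g * c) ^ n = c⁻¹ * g ^ n * c := by
  induction n with
  | zero => group
  | succ n ih => rw [pow_succ, pow_succ, ih]; group

theorem freeGroup_torsion_free_aux (k : ℕ) :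
    ∀ g : FreeGroup α, g.toWord.length ≤ k → IsOfFinOrder g → g = 1 := by
  induction k with
  | zero =>
    intro g hlen _
    exact FreeGroup.toWord_eq_nil_iff.mp (List.length_eq_zero_iff.mp (Nat.le_zero.mp hlen))
  | succ k ih =>
    intro g hlen hfin
    obtain ⟨n, hn, hgn⟩ := isOfFinOrder_iff_pow_eq_one.mp hfin
    have hred : List.Chain' NC g.toWord := by
      rw [← FreeGroup.reduce_toWord]; exact chain'_reduce _
    rcases hLdef : g.toWord with _ | ⟨x, M⟩
    · exact FreeGroup.toWord_eq_nil_iff.mp hLdef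
    · rw [hLdef] at hred
      have hgL : g = FreeGroup.mk (x :: M) := by rw [← hLdef, FreeGroup.mk_toWord]
      by_cases hcyc : NC ((x :: M).getLast (List.cons_ne_nil x M)) x
      · -- cyclically reduced: g ^ n ≠ 1, contradiction
        exfalso
        obtain ⟨m, rfl⟩ : ∃ m, n = m + 1 := ⟨n - 1, (Nat.succ_pred_eq_of_pos hn).symm⟩
        have hchain : List.Chain' NC ((x :: M) ++ (List.replicate m (x :: M)).flatten) := by
          refine chain'_flatten_replicate _ hred ?_ m
          intro p hp q hq
          rw [List.getLast?_eq_getLast (List.cons_ne_nil x M)] at hp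
          simp at hq hp
          rw [← hp, ← hq]
          exact hcyc
        have : (g ^ (m + 1)).toWord = (x :: M) ++ (List.replicate m (x :: M)).flatten := by
          rw [hgL, mk_pow, List.replicate_succ, List.flatten_cons, FreeGroup.toWord_mk,
            reduce_eq_self _ hchain]
        rw [hgn] at this
        simp [FreeGroup.toWord_one] at this
      · -- cancellation between the ends: conjugate to shorter word
        have hM : M ≠ [] := by
          rintro rfl
          apply hcyc
          simp [NC]
        have hlast : M.getLast hM = (x.1, !x.2) := by
          have h1 : (x :: M).getLast (List.cons_ne_nil x M) = M.getLast hM :=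
            List.getLast_cons hM
          simp only [NC, not_not, h1] at hcyc
          obtain ⟨h2, h3⟩ := hcyc
          exact Prod.ext h2 h3
        have hMdec : M = M.dropLast ++ [(x.1, !x.2)] := by
          conv_lhs => rw [← List.dropLast_append_getLast hM]
          rw [hlast]
        set c : FreeGroup α := FreeGroup.mk [x] with hc
        have hcinv : c⁻¹ = FreeGroup.mk [(x.1, !x.2)] := by
          rw [hc, FreeGroup.inv_mk]
          rfl
        set g' : FreeGroup α := FreeGroup.mk M.dropLast with hg'
        have hconj : g = c * g' * c⁻¹ := by
          rw [hgL, hcinv, hg', hc, FreeGroup.mul_mk, FreeGroup.mul_mk]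
          congr 1
          rw [List.append_assoc, ← hMdec]
          rfl
        have hg'eq : g' = c⁻¹ * g * c := by rw [hconj]; group
        have hg'n : g' ^ n = 1 := by rw [hg'eq, conj_pow_aux, hgn]; group
        have hfin' : IsOfFinOrder g' := isOfFinOrder_iff_pow_eq_one.mpr ⟨n, hn, hg'n⟩
        have hlen' : g'.toWord.length ≤ k := by
          have h1 : g'.toWord.length ≤ M.dropLast.length :=
            (FreeGroup.Red.length_le FreeGroup.reduce.red).trans_eq rfl
          have h2 : M.dropLast.length ≤ M.length := by
            rw [List.length_dropLast]; omega
          have h3 : M.length + 1 ≤ k + 1 := by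
            rw [← List.length_cons (a := x) (as := M), ← hLdef]; exact hlen
          omega
        have : g' = 1 := ih g' hlen' hfin'
        rw [hconj, this, mul_one, mul_inv_cancel]

theorem freeGroup_torsion_free (g : FreeGroup α) (h : IsOfFinOrder g) : g = 1 :=
  freeGroup_torsion_free_aux g.toWord.length g le_rfl h

end Part1



abbrev F2 : Type := FreeGroup (Fin 2)

/-- The monodromy `f₀ ↦ f₁, f₁ ↦ f₀⁻¹ f₁`. -/
def phi0 : F2 →* F2 :=
  FreeGroup.lift ![FreeGroup.of 1, (FreeGroup.of 0)⁻¹ * FreeGroup.of 1]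

/-- Its inverse `f₀ ↦ f₀ f₁⁻¹, f₁ ↦ f₀`. -/
def psi0 : F2 →* F2 :=
  FreeGroup.lift ![FreeGroup.of 0 * (FreeGroup.of 1)⁻¹, FreeGroup.of 0]

theorem psi0_comp_phi0 : psi0.comp phi0 = MonoidHom.id F2 := by
  apply FreeGroup.ext_hom
  intro i
  fin_cases i <;> simp [phi0, psi0]

theorem phi0_comp_psi0 : phi0.comp psi0 = MonoidHom.id F2 := by
  apply FreeGroup.ext_hom
  intro i
  fin_cases i <;> simp [phi0, psi0]

/-- The monodromy as an automorphism. -/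
def phiA : MulAut F2 := MonoidHom.toMulEquiv phi0 psi0 psi0_comp_phi0 phi0_comp_psi0

@[simp] theorem phiA_apply (v : F2) : phiA v = phi0 v := rfl

/-- The `ℤ`-action on `F2` generated by `phiA`. -/
def zhom : Multiplicative ℤ →* MulAut F2 := zpowersHom (MulAut F2) phiA

/-- The semidirect product `F₂ ⋊ ℤ`. -/
abbrev Grp : Type := SemidirectProduct F2 (Multiplicative ℤ) zhom

open SemidirectProduct

noncomputable section

def t : Multiplicative ℤ := Multiplicative.ofAdd 1

theorem inr_mul_inl (g : Multiplicative ℤ) (n : F2) :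
    (inr g : Grp) * inl n = inl (zhom g n) * inr g := by
  rw [inl_aut, mul_assoc, ← map_mul, inv_mul_cancel, map_one, mul_one]

theorem zhom_t (v : F2) : zhom t v = phi0 v := by
  simp [zhom, t, zpowersHom_apply]

/-- Images of the generators. -/
def A : Grp := inr t
def B : Grp := inl (FreeGroup.of 0) * inr t

theorem braid_holds : A * B * A = B * A * B := by
  ext <;>
    simp [A, B, mul_left, mul_right, left_inl, right_inl, left_inr, right_inr,
      zhom_t, phi0] <;>
    group

/-- The homomorphism `B3 →* Grp`. -/
def Theta : B3 →* Grp :=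
  PresentedGroup.toGroup (f := ![A, B]) (by
    intro r hr
    rw [braidRel, Set.mem_singleton_iff] at hr
    subst hr
    simp only [map_mul, map_inv, FreeGroup.lift_apply_of]
    rw [show ((![A, B] : Fin 2 → Grp) 0) = A from rfl,
      show ((![A, B] : Fin 2 → Grp) 1) = B from rfl, braid_holds]
    group)


def pga : B3 := PresentedGroup.of 0
def pgb : B3 := PresentedGroup.of 1

theorem braidB3 : pga * pgb * pga = pgb * pga * pgb := by
  have h : PresentedGroup.mk braidRel (FreeGroup.of 0 * FreeGroup.of 1 * FreeGroup.of 0 *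
      (FreeGroup.of 1 * FreeGroup.of 0 * FreeGroup.of 1)⁻¹) = 1 :=
    (QuotientGroup.eq_one_iff _).mpr (Subgroup.subset_normalClosure (Set.mem_singleton _))
  simp only [map_mul, map_inv] at h
  rw [mul_inv_eq_one] at h
  exact h

def x3 : B3 := pgb * pga⁻¹

def fN : F2 →* B3 := FreeGroup.lift ![x3, pga * x3 * pga⁻¹]

def fZ : Multiplicative ℤ →* B3 := zpowersHom B3 pga

theorem fN_phi0 (v : F2) : fN (phi0 v) = pga * fN v * pga⁻¹ := by
  have key : fN.comp phi0 = (MulAut.conj pga).toMonoidHom.comp fN := by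
    apply FreeGroup.ext_hom
    intro i
    fin_cases i
    · show fN (phi0 (FreeGroup.of 0)) = MulAut.conj pga (fN (FreeGroup.of 0))
      simp only [phi0, fN, FreeGroup.lift_apply_of, MulAut.conj_apply]
      simp
    · show fN (phi0 (FreeGroup.of 1)) = MulAut.conj pga (fN (FreeGroup.of 1))
      simp only [phi0, fN, map_mul, map_inv, FreeGroup.lift_apply_of, MulAut.conj_apply]
      simp only [Matrix.cons_val_zero, Matrix.cons_val_one, Matrix.head_cons]
      calc x3⁻¹ * (pga * x3 * pga⁻¹)
          = pga * pgb⁻¹ * (pga * pgb * pga) * (pga⁻¹ * pga⁻¹ * pga⁻¹) := by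
            rw [x3]; group
        _ = pga * pgb⁻¹ * (pgb * pga * pgb) * (pga⁻¹ * pga⁻¹ * pga⁻¹) := by
            rw [braidB3]
        _ = pga * (pga * x3 * pga⁻¹) * pga⁻¹ := by rw [x3]; group
  exact DFunLike.congr_fun key v

theorem fN_phiA_inv (v : F2) : fN (phiA⁻¹ v) = pga⁻¹ * fN v * pga := by
  have h2 : phiA (phiA⁻¹ v) = v := by
    have h3 : phiA (phiA⁻¹ v) = (phiA * phiA⁻¹) v := rfl
    rw [h3, mul_inv_cancel]
    rfl
  have h := fN_phi0 (phiA⁻¹ v)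
  rw [← phiA_apply, h2] at h
  rw [h]
  group

theorem fN_pow (n : ℤ) : ∀ v : F2, fN ((phiA ^ n) v) = pga ^ n * fN v * (pga ^ n)⁻¹ := by
  induction n using Int.induction_on with
  | zero => intro v; simp
  | succ n ih =>
    intro v
    have h1 : (phiA ^ ((n : ℤ) + 1)) v = (phiA ^ (n : ℤ)) (phiA v) := by
      rw [zpow_add, zpow_one]
      rfl
    rw [h1, ih, phiA_apply, fN_phi0, zpow_add, zpow_one]
    group
  | pred n ih =>
    intro v
    have h1 : (phiA ^ (-(n : ℤ) - 1)) v = (phiA ^ (-(n : ℤ))) (phiA⁻¹ v) := by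
      rw [sub_eq_add_neg, zpow_add, zpow_neg_one]
      rfl
    rw [h1, ih, fN_phiA_inv, sub_eq_add_neg, zpow_add, zpow_neg_one]
    group

/-- The retraction `Grp →* B3`. -/
def Xi : Grp →* B3 :=
  SemidirectProduct.lift fN fZ (by
    intro g
    apply MonoidHom.ext
    intro v
    show fN (zhom g v) = MulAut.conj (fZ g) (fN v)
    rw [MulAut.conj_apply]
    have h1 : zhom g v = (phiA ^ g.toAdd) v := rfl
    have h2 : fZ g = pga ^ g.toAdd := rfl
    rw [h1, h2, fN_pow])

theorem Xi_comp_Theta : Xi.comp Theta = MonoidHom.id B3 := by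
  apply PresentedGroup.ext
  intro i
  fin_cases i
  · show Xi (Theta (PresentedGroup.of 0)) = PresentedGroup.of 0
    rw [Theta, PresentedGroup.toGroup.of]
    show Xi A = pga
    rw [A, Xi, SemidirectProduct.lift_inr]
    show pga ^ (1 : ℤ) = pga
    rw [zpow_one]
  · show Xi (Theta (PresentedGroup.of 1)) = PresentedGroup.of 1
    rw [Theta, PresentedGroup.toGroup.of]
    show Xi B = pgb
    rw [B, Xi, map_mul, SemidirectProduct.lift_inl, SemidirectProduct.lift_inr]
    show fN (FreeGroup.of 0) * pga ^ (1 : ℤ) = pgb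
    rw [zpow_one]
    simp only [fN, FreeGroup.lift_apply_of, Matrix.cons_val_zero, x3]
    group

end

end B3Proof

open B3Proof SemidirectProduct in
/-- The braid group `B₃ = ⟨a, b ∣ aba = bab⟩` is torsion-free. -/
theorem B3_torsion_free : ∀ g : B3, IsOfFinOrder g → g = 1 := by
  intro g hg
  obtain ⟨n, hn, hgn⟩ := isOfFinOrder_iff_pow_eq_one.mp hg
  have h1 : (Theta g) ^ n = 1 := by rw [← map_pow, hgn, map_one]
  have h2 : rightHom (Theta g) ^ n = 1 := by rw [← map_pow, h1, map_one]
  have h3' : rightHom (Theta g) = 1 := by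
    have h2' := congrArg Multiplicative.toAdd h2
    rw [toAdd_pow, nsmul_eq_mul] at h2'
    simp only [toAdd_one] at h2'
    have hz : (rightHom (Theta g)).toAdd = 0 :=
      (mul_eq_zero.mp h2').resolve_left (by exact_mod_cast hn.ne')
    rw [← ofAdd_toAdd (rightHom (Theta g)), hz]
    rfl
  have h4 : Theta g = inl (Theta g).left := by
    conv_lhs => rw [← inl_left_mul_inr_right (Theta g)]
    rw [show (Theta g).right = 1 from h3', map_one, mul_one]
  have h5 : (Theta g).left ^ n = 1 := by
    apply inl_injective (φ := B3Proof.zhom)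
    rw [map_pow, ← h4, h1, map_one]
  have h6 : (Theta g).left = 1 :=
    freeGroup_torsion_free _ (isOfFinOrder_iff_pow_eq_one.mpr ⟨n, hn, h5⟩)
  have h7 : Theta g = 1 := by rw [h4, h6, map_one]
  have h8 := DFunLike.congr_fun Xi_comp_Theta g
  simp only [MonoidHom.comp_apply, MonoidHom.id_apply] at h8
  rw [← h8, h7, map_one]
end
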